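/- Let E be a real Banach space, let e : ℝ → E be continuous, and let t, h ∈ ℝ with h ≥ 0. Then ∫₀^h ( ∫₀^ζ ζ ( e(t+ζ) − e(t+χ) ) dχ ) dζ = (1/2) ∫₀^h ( 3ζ² − h² ) e(t+ζ) dζ. -/

import Mathlib

open intervalIntegral MeasureTheory

theorem theta31_integral_reduction {E : Type*} [NormedAddCommGroup E] [NormedSpace ℝ E]
    [CompleteSpace E] (e : ℝ → E) (he : Continuous e) (t h : ℝ) (hh : 0 ≤ h) :
    (∫ ζ in (0:ℝ)..h, ∫ χ in (0:ℝ)..ζ, ζ • (e (t + ζ) - e (t + χ)))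
      = (1 / 2 : ℝ) • ∫ ζ in (0:ℝ)..h, (3 * ζ ^ 2 - h ^ 2) • e (t + ζ) := by
  set g : ℝ → E := fun x => e (t + x) with hg_def
  have hg : Continuous g := he.comp (continuous_const.add continuous_id)
  set F : ℝ → E := fun ζ => ∫ x in (0:ℝ)..ζ, g x with hF_def
  have hgint : ∀ a b : ℝ, IntervalIntegrable g volume a b := fun a b =>
    hg.intervalIntegrable a b
  have hF_cont : Continuous F := intervalIntegral.continuous_primitive hgint 0
  -- inner integral
  have inner_eq : ∀ ζ : ℝ, (∫ χ in (0:ℝ)..ζ, ζ • (g ζ - g χ))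
      = (ζ * ζ) • g ζ - ζ • F ζ := by
    intro ζ
    have h1 : (∫ χ in (0:ℝ)..ζ, ζ • (g ζ - g χ))
        = (∫ χ in (0:ℝ)..ζ, ζ • g ζ) - ∫ χ in (0:ℝ)..ζ, ζ • g χ := by
      rw [← intervalIntegral.integral_sub (f := fun _ => ζ • g ζ) (g := fun χ => ζ • g χ)
        intervalIntegrable_const ((hg.const_smul ζ).intervalIntegrable 0 ζ)]
      simp [smul_sub]
    rw [h1, intervalIntegral.integral_const, intervalIntegral.integral_smul, sub_zero,
      smul_smul]
  have hF_deriv : ∀ ζ : ℝ, HasDerivAt F (g ζ) ζ := fun ζ =>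
    intervalIntegral.integral_hasDerivAt_right (hgint 0 ζ)
      (hg.stronglyMeasurableAtFilter _ _) hg.continuousAt
  -- integration by parts: ∫ ζ•F ζ + (ζ²/2)•g ζ = (h²/2)•F h
  have ibp : (∫ ζ in (0:ℝ)..h, (ζ • F ζ + (ζ ^ 2 / 2) • g ζ))
      = (h ^ 2 / 2) • F h := by
    have hW : ∀ ζ ∈ Set.uIcc (0:ℝ) h,
        HasDerivAt (fun ζ => (ζ ^ 2 / 2) • F ζ) (ζ • F ζ + (ζ ^ 2 / 2) • g ζ) ζ := by
      intro ζ _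
      have hu : HasDerivAt (fun ζ : ℝ => ζ ^ 2 / 2) ζ ζ := by
        have := (hasDerivAt_pow 2 ζ).div_const 2
        simpa using this
      exact (hu.smul (hF_deriv ζ)).congr_deriv (add_comm _ _)
    have hint : IntervalIntegrable (fun ζ => ζ • F ζ + (ζ ^ 2 / 2) • g ζ) volume 0 h :=
      ((continuous_id.smul hF_cont).add
        ((continuous_pow 2).div_const 2 |>.smul hg)).intervalIntegrable 0 h
    have := intervalIntegral.integral_eq_sub_of_hasDerivAt hW hint
    simpa [hF_def] using this
  have hFint : IntervalIntegrable (fun ζ => ζ • F ζ) volume 0 h :=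
    (continuous_id.smul hF_cont).intervalIntegrable 0 h
  have hq : IntervalIntegrable (fun ζ => (ζ ^ 2 / 2) • g ζ) volume 0 h :=
    ((continuous_pow 2).div_const 2 |>.smul hg).intervalIntegrable 0 h
  have key : (∫ ζ in (0:ℝ)..h, ζ • F ζ)
      = (h ^ 2 / 2) • F h - ∫ ζ in (0:ℝ)..h, (ζ ^ 2 / 2) • g ζ := by
    rw [← ibp, intervalIntegral.integral_add hFint hq]; abel
  calc (∫ ζ in (0:ℝ)..h, ∫ χ in (0:ℝ)..ζ, ζ • (g ζ - g χ))
      = ∫ ζ in (0:ℝ)..h, ((ζ * ζ) • g ζ - ζ • F ζ) := by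
        simp_rw [inner_eq]
    _ = (∫ ζ in (0:ℝ)..h, (ζ * ζ) • g ζ) - ∫ ζ in (0:ℝ)..h, ζ • F ζ := by
        exact intervalIntegral.integral_sub
          (((continuous_id.mul continuous_id).smul hg).intervalIntegrable 0 h) hFint
    _ = (∫ ζ in (0:ℝ)..h, (ζ * ζ) • g ζ) + (∫ ζ in (0:ℝ)..h, (ζ ^ 2 / 2) • g ζ)
          - (h ^ 2 / 2) • F h := by rw [key]; abel
    _ = (1 / 2 : ℝ) • ∫ ζ in (0:ℝ)..h, (3 * ζ ^ 2 - h ^ 2) • g ζ := by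
        have hsplit : (∫ ζ in (0:ℝ)..h, (3 * ζ ^ 2 - h ^ 2) • g ζ)
            = (∫ ζ in (0:ℝ)..h, (3 * ζ ^ 2) • g ζ) - ∫ ζ in (0:ℝ)..h, (h ^ 2) • g ζ := by
          rw [← intervalIntegral.integral_sub (f := fun ζ => (3 * ζ ^ 2) • g ζ)
            (g := fun ζ => (h ^ 2) • g ζ)
            (((continuous_const.mul (continuous_pow 2)).smul hg).intervalIntegrable 0 h)
            ((hg.const_smul _).intervalIntegrable 0 h)]
          simp [sub_smul]
        rw [hsplit, intervalIntegral.integral_smul, smul_sub, smul_smul]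
        have h3 : (∫ ζ in (0:ℝ)..h, (3 * ζ ^ 2) • g ζ)
            = (3:ℝ) • ∫ ζ in (0:ℝ)..h, (ζ ^ 2) • g ζ := by
          rw [← intervalIntegral.integral_smul]
          simp [smul_smul]
        rw [h3, smul_smul]
        have e1 : (∫ ζ in (0:ℝ)..h, (ζ * ζ) • g ζ) = ∫ ζ in (0:ℝ)..h, (ζ ^ 2) • g ζ := by
          simp [sq]
        have e2 : (∫ ζ in (0:ℝ)..h, (ζ ^ 2 / 2) • g ζ)
            = ((1:ℝ)/2) • ∫ ζ in (0:ℝ)..h, (ζ ^ 2) • g ζ := by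
          rw [← intervalIntegral.integral_smul]
          congr 1; ext ζ; rw [smul_smul]; ring_nf
        rw [e1, e2]
        norm_num
        module
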